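/- arXiv:0712.2202 — 2 statements merged into one kernel-verified Lean document; each statement's English description precedes it below -/
import Mathlib

section
/- Let F_s : ℝ⁴ → ℝ² be the wrinkling deformation F_s(t,x,y,z) = (t² − x² + y² − z² + st, 2tx + 2yz). Then the critical point set of F_s is exactly {(t,x,y,z) : x² + t² + (s/2)t = 0, y = 0, z = 0}. For s ≠ 0 this set is a circle of radius |s|/4 centered at (t,x) = (−s/4, 0) in the plane y = z = 0, and for s = 0 it is the single point 0. -/
/-- The wrinkling deformation `F_s(t,x,y,z) = (t² − x² + y² − z² + st, 2tx + 2yz)`. -/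
noncomputable def wrinkleModel (s : ℝ) : ℝ × ℝ × ℝ × ℝ → ℝ × ℝ :=
  fun p => (p.1 ^ 2 - p.2.1 ^ 2 + p.2.2.1 ^ 2 - p.2.2.2 ^ 2 + s * p.1,
            2 * p.1 * p.2.1 + 2 * p.2.2.1 * p.2.2.2)

/-- Explicit Jacobian of the wrinkle model at `(t,x,y,z)`. -/
noncomputable def wD (s t x y z : ℝ) : (ℝ × ℝ × ℝ × ℝ) →L[ℝ] ℝ × ℝ :=
  LinearMap.toContinuousLinearMap
  { toFun := fun v => ((2*t+s)*v.1 - 2*x*v.2.1 + 2*y*v.2.2.1 - 2*z*v.2.2.2,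
                       2*x*v.1 + 2*t*v.2.1 + 2*z*v.2.2.1 + 2*y*v.2.2.2)
    map_add' := by intro a b; refine Prod.ext ?_ ?_ <;> simp <;> ring
    map_smul' := by intro c a; refine Prod.ext ?_ ?_ <;> simp <;> ring }

@[simp] lemma wD_apply (s t x y z : ℝ) (v : ℝ × ℝ × ℝ × ℝ) :
    wD s t x y z v = ((2*t+s)*v.1 - 2*x*v.2.1 + 2*y*v.2.2.1 - 2*z*v.2.2.2,
                       2*x*v.1 + 2*t*v.2.1 + 2*z*v.2.2.1 + 2*y*v.2.2.2) := rfl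

@[simp] lemma wD_lin_apply (s t x y z : ℝ) (v : ℝ × ℝ × ℝ × ℝ) :
    (wD s t x y z).toLinearMap v = ((2*t+s)*v.1 - 2*x*v.2.1 + 2*y*v.2.2.1 - 2*z*v.2.2.2,
                       2*x*v.1 + 2*t*v.2.1 + 2*z*v.2.2.1 + 2*y*v.2.2.2) := rfl

lemma hasFDeriv_wrinkle (s t x y z : ℝ) :
    HasFDerivAt (wrinkleModel s) (wD s t x y z) (t, x, y, z) := by
  have e1 : HasFDerivAt (fun p : ℝ × ℝ × ℝ × ℝ => p.1)
      (ContinuousLinearMap.fst ℝ ℝ (ℝ × ℝ × ℝ)) (t, x, y, z) := hasFDerivAt_fst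
  have e2' : HasFDerivAt (fun p : ℝ × ℝ × ℝ × ℝ => p.2)
      (ContinuousLinearMap.snd ℝ ℝ (ℝ × ℝ × ℝ)) (t, x, y, z) := hasFDerivAt_snd
  have e2 := (hasFDerivAt_fst (p := ((t,x,y,z) : ℝ × ℝ × ℝ × ℝ).2)).comp (t,x,y,z) e2'
  have e3' := (hasFDerivAt_snd (p := ((t,x,y,z) : ℝ × ℝ × ℝ × ℝ).2)).comp (t,x,y,z) e2'
  have e3 := (hasFDerivAt_fst (p := ((t,x,y,z) : ℝ × ℝ × ℝ × ℝ).2.2)).comp (t,x,y,z) e3'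
  have e4 := (hasFDerivAt_snd (p := ((t,x,y,z) : ℝ × ℝ × ℝ × ℝ).2.2)).comp (t,x,y,z) e3'
  have c1 := ((((e1.mul e1).sub (e2.mul e2)).add (e3.mul e3)).sub (e4.mul e4)).add
    (e1.const_mul s)
  have c2 := ((e1.mul e2).const_mul 2).add ((e3.mul e4).const_mul 2)
  have H := c1.prodMk c2
  have H2 := H.congr_of_eventuallyEq (f₁ := wrinkleModel s)
    (Filter.Eventually.of_forall fun p => by
      refine Prod.ext ?_ ?_ <;> simp [wrinkleModel] <;> ring)
  refine H2.congr_fderiv ?_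
  refine ContinuousLinearMap.ext fun v => ?_
  refine Prod.ext ?_ ?_ <;>
    simp [ContinuousLinearMap.comp_apply] <;> ring

lemma rank_lt_two_iff (f : (ℝ × ℝ × ℝ × ℝ) →ₗ[ℝ] ℝ × ℝ) :
    LinearMap.rank f < 2 ↔ ¬ Function.Surjective f := by
  have hfin : Module.finrank ℝ (ℝ × ℝ) = 2 := by
    simp [Module.finrank_prod]
  rw [LinearMap.rank, ← Module.finrank_eq_rank, ← LinearMap.range_eq_top]
  rw [show (2 : Cardinal) = ((2 : ℕ) : Cardinal) by norm_num, Nat.cast_lt]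
  constructor
  · intro h htop
    rw [htop] at h
    simp [hfin] at h
  · intro h
    refine lt_of_le_of_ne ?_ ?_
    · rw [← hfin]; exact Submodule.finrank_le _
    · intro he
      exact h (Submodule.eq_top_of_finrank_eq (he.trans hfin.symm))

set_option maxHeartbeats 1000000 in
lemma wrinkle_key (s : ℝ) :
    {p : ℝ × ℝ × ℝ × ℝ | LinearMap.rank (fderiv ℝ (wrinkleModel s) p).toLinearMap < 2} =
      {p : ℝ × ℝ × ℝ × ℝ |
        p.2.1 ^ 2 + p.1 ^ 2 + (s / 2) * p.1 = 0 ∧ p.2.2.1 = 0 ∧ p.2.2.2 = 0} := by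
  ext ⟨t, x, y, z⟩
  simp only [Set.mem_setOf_eq]
  rw [(hasFDeriv_wrinkle s t x y z).fderiv, rank_lt_two_iff]
  constructor
  · intro hns
    by_contra hcond
    apply hns
    by_cases hP : x ^ 2 + t ^ 2 + (s / 2) * t = 0
    · have hyz : ¬(y = 0 ∧ z = 0) := fun h => hcond ⟨hP, h⟩
      have he : y ^ 2 + z ^ 2 ≠ 0 := by
        intro h0
        exact hyz ⟨by nlinarith [sq_nonneg y, sq_nonneg z], by nlinarith [sq_nonneg y, sq_nonneg z]⟩
      rintro ⟨u, v⟩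
      refine ⟨(0, 0, (2*y*u + 2*z*v)/(4*(y^2+z^2)), (-(2*z)*u + 2*y*v)/(4*(y^2+z^2))), ?_⟩
      have h4 : (4:ℝ) * (y^2+z^2) ≠ 0 := by exact mul_ne_zero (by norm_num) he
      refine Prod.ext ?_ ?_ <;> simp only [ContinuousLinearMap.coe_coe, wD_lin_apply, wD_apply] <;> field_simp <;> ring
    · rintro ⟨u, v⟩
      refine ⟨((2*t*u + 2*x*v)/(4*(x^2+t^2+(s/2)*t)),
        (-(2*x)*u + (2*t+s)*v)/(4*(x^2+t^2+(s/2)*t)), 0, 0), ?_⟩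
      have h4 : (4:ℝ) * (x^2+t^2+(s/2)*t) ≠ 0 := mul_ne_zero (by norm_num) hP
      have h8 : t * s * 4 + t ^ 2 * 8 + x ^ 2 * 8 ≠ 0 := fun h => hP (by linarith)
      refine Prod.ext ?_ ?_ <;>
        simp only [ContinuousLinearMap.coe_coe, wD_lin_apply, wD_apply] <;> field_simp [h8]
      · have hd : 2 * (x ^ 2 + t ^ 2) + t * s ≠ 0 := fun h => hP (by linarith)
        field_simp; ring
      · have hd : 2 * (x ^ 2 + t ^ 2) + t * s ≠ 0 := fun h => hP (by linarith)
        field_simp; ring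
  · rintro ⟨hc, hy, hz⟩ hsurj
    obtain ⟨⟨v1, v2, v3, v4⟩, hv⟩ := hsurj (1, 0)
    obtain ⟨⟨w1, w2, w3, w4⟩, hw⟩ := hsurj (0, 1)
    subst hy hz
    simp only [ContinuousLinearMap.coe_coe, wD_lin_apply, wD_apply, Prod.mk.injEq] at hv hw
    norm_num at hv hw
    obtain ⟨hv1, hv2⟩ := hv
    obtain ⟨hw1, hw2⟩ := hw
    have hx0 : x = 0 := by linear_combination (-t)*hw1 + (-x)*hw2 + 2*w1*hc
    have ht0 : t = 0 := by linear_combination (-t)*hv1 + (-x)*hv2 + 2*v1*hc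
    rw [hx0, ht0] at hw2
    norm_num at hw2

/-- The critical point set of the wrinkling deformation is
`{x² + t² + (s/2)t = 0, y = z = 0}`; for `s ≠ 0` this is the circle of radius
`|s|/4` centered at `(t,x) = (−s/4, 0)` in the plane `y = z = 0`, and for `s = 0`
it is the single point `0`. -/
theorem stmt5 (s : ℝ) :
    {p : ℝ × ℝ × ℝ × ℝ | LinearMap.rank (fderiv ℝ (wrinkleModel s) p).toLinearMap < 2} =
      {p : ℝ × ℝ × ℝ × ℝ |
        p.2.1 ^ 2 + p.1 ^ 2 + (s / 2) * p.1 = 0 ∧ p.2.2.1 = 0 ∧ p.2.2.2 = 0} ∧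
    (s ≠ 0 →
      {p : ℝ × ℝ × ℝ × ℝ | LinearMap.rank (fderiv ℝ (wrinkleModel s) p).toLinearMap < 2} =
        {p : ℝ × ℝ × ℝ × ℝ |
          (p.1 - (-s / 4)) ^ 2 + (p.2.1 - 0) ^ 2 = (|s| / 4) ^ 2 ∧
            p.2.2.1 = 0 ∧ p.2.2.2 = 0}) ∧
    (s = 0 →
      {p : ℝ × ℝ × ℝ × ℝ | LinearMap.rank (fderiv ℝ (wrinkleModel s) p).toLinearMap < 2} =
        {((0 : ℝ), (0 : ℝ), (0 : ℝ), (0 : ℝ))}) := by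
  refine ⟨wrinkle_key s, fun hs => ?_, fun hs => ?_⟩
  · rw [wrinkle_key s]
    ext ⟨t, x, y, z⟩
    simp only [Set.mem_setOf_eq]
    constructor
    · rintro ⟨h1, h2, h3⟩
      exact ⟨by linear_combination h1 - (1/16)*(sq_abs s), h2, h3⟩
    · rintro ⟨h1, h2, h3⟩
      exact ⟨by linear_combination h1 + (1/16)*(sq_abs s), h2, h3⟩
  · subst hs
    rw [wrinkle_key 0]
    ext ⟨t, x, y, z⟩
    simp only [Set.mem_setOf_eq, Set.mem_singleton_iff, Prod.ext_iff]
    constructor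
    · rintro ⟨h1, h2, h3⟩
      refine ⟨by nlinarith [sq_nonneg t, sq_nonneg x], by nlinarith [sq_nonneg t, sq_nonneg x], h2, h3⟩
    · rintro ⟨h1, h2, h3, h4⟩
      subst h1 h2 h3 h4
      norm_num
end

section
/- For the wrinkling map F_s with s ≠ 0, the critical value set of F_s is the parametrized closed curve θ ↦ (−(s²/8)(1 + cos θ)(2 − cos θ), −(s²/8)(1 + cos θ) sin θ), θ ∈ [0, 2π]; that is, F_s maps the critical circle, parametrized by t = −(s/4)(1 + cos θ), x = (s/4) sin θ, y = z = 0, onto this curve. -/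
open Real

/-- Explicit derivative of the wrinkle model. -/
noncomputable def wDeriv (s : ℝ) (p : ℝ × ℝ × ℝ × ℝ) : (ℝ × ℝ × ℝ × ℝ) →L[ℝ] ℝ × ℝ :=
  LinearMap.toContinuousLinearMap
    { toFun := fun v =>
        ((2 * p.1 + s) * v.1 - 2 * p.2.1 * v.2.1 + 2 * p.2.2.1 * v.2.2.1
            - 2 * p.2.2.2 * v.2.2.2,
          2 * p.2.1 * v.1 + 2 * p.1 * v.2.1 + 2 * p.2.2.2 * v.2.2.1 + 2 * p.2.2.1 * v.2.2.2)
      map_add' := by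
        intro a b
        simp only [Prod.fst_add, Prod.snd_add, Prod.mk_add_mk, Prod.mk.injEq]
        constructor <;> ring
      map_smul' := by
        intro c a
        simp only [Prod.smul_fst, Prod.smul_snd, Prod.smul_mk, smul_eq_mul, RingHom.id_apply,
          Prod.mk.injEq]
        constructor <;> ring }

lemma wDeriv_apply (s : ℝ) (p v : ℝ × ℝ × ℝ × ℝ) :
    wDeriv s p v =
      ((2 * p.1 + s) * v.1 - 2 * p.2.1 * v.2.1 + 2 * p.2.2.1 * v.2.2.1
          - 2 * p.2.2.2 * v.2.2.2,
        2 * p.2.1 * v.1 + 2 * p.1 * v.2.1 + 2 * p.2.2.2 * v.2.2.1 + 2 * p.2.2.1 * v.2.2.2) :=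
  rfl

lemma wrinkle_hasFDerivAt (s : ℝ) (p : ℝ × ℝ × ℝ × ℝ) :
    HasFDerivAt (wrinkleModel s) (wDeriv s p) p := by
  have h1 : HasFDerivAt (fun q : ℝ × ℝ × ℝ × ℝ => q.1)
      (ContinuousLinearMap.fst ℝ ℝ (ℝ × ℝ × ℝ)) p := hasFDerivAt_fst
  have h2 : HasFDerivAt (fun q : ℝ × ℝ × ℝ × ℝ => q.2.1)
      ((ContinuousLinearMap.fst ℝ ℝ (ℝ × ℝ)).comp
        (ContinuousLinearMap.snd ℝ ℝ (ℝ × ℝ × ℝ))) p := hasFDerivAt_snd.fst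
  have h3 : HasFDerivAt (fun q : ℝ × ℝ × ℝ × ℝ => q.2.2.1)
      ((ContinuousLinearMap.fst ℝ ℝ ℝ).comp ((ContinuousLinearMap.snd ℝ ℝ (ℝ × ℝ)).comp
        (ContinuousLinearMap.snd ℝ ℝ (ℝ × ℝ × ℝ)))) p := hasFDerivAt_snd.snd.fst
  have h4 : HasFDerivAt (fun q : ℝ × ℝ × ℝ × ℝ => q.2.2.2)
      ((ContinuousLinearMap.snd ℝ ℝ ℝ).comp ((ContinuousLinearMap.snd ℝ ℝ (ℝ × ℝ)).comp
        (ContinuousLinearMap.snd ℝ ℝ (ℝ × ℝ × ℝ)))) p := hasFDerivAt_snd.snd.snd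
  have HA := ((((h1.mul h1).sub (h2.mul h2)).add (h3.mul h3)).sub (h4.mul h4)).add
    (h1.const_mul s)
  have HB := (((h1.const_mul 2).mul h2).add ((h3.const_mul 2).mul h4))
  have H := HA.prodMk HB
  have hfun : wrinkleModel s = fun q : ℝ × ℝ × ℝ × ℝ =>
      ((fun q : ℝ × ℝ × ℝ × ℝ => q.1 * q.1 - q.2.1 * q.2.1 + q.2.2.1 * q.2.2.1
          - q.2.2.2 * q.2.2.2 + s * q.1) q,
        (fun q : ℝ × ℝ × ℝ × ℝ => 2 * q.1 * q.2.1 + 2 * q.2.2.1 * q.2.2.2) q) := by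
    funext q
    simp only [wrinkleModel, Prod.mk.injEq]
    constructor <;> first | ring | trivial
  rw [hfun]
  refine H.congr_fderiv ?_
  refine ContinuousLinearMap.ext fun v => ?_
  rw [wDeriv_apply]
  simp only [ContinuousLinearMap.prod_apply, ContinuousLinearMap.add_apply,
    ContinuousLinearMap.sub_apply, ContinuousLinearMap.smul_apply,
    ContinuousLinearMap.coe_fst', ContinuousLinearMap.coe_snd',
    ContinuousLinearMap.coe_comp', Function.comp_apply, smul_eq_mul, Prod.mk.injEq]
  constructor <;> ring

lemma rank_lt_two_of_ker {L : (ℝ × ℝ × ℝ × ℝ) →ₗ[ℝ] ℝ × ℝ} {φ : (ℝ × ℝ) →ₗ[ℝ] ℝ}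
    (hφ : φ ≠ 0) (h : ∀ v, φ (L v) = 0) : LinearMap.rank L < 2 := by
  have hle : LinearMap.range L ≤ LinearMap.ker φ := by
    rintro q ⟨v, rfl⟩
    exact h v
  have h1 : LinearMap.ker φ < ⊤ :=
    lt_top_iff_ne_top.2 (fun ht => hφ (LinearMap.ker_eq_top.1 ht))
  have h2 : Module.finrank ℝ (LinearMap.ker φ) < Module.finrank ℝ (ℝ × ℝ) :=
    Submodule.finrank_lt h1.ne
  have h3 : Module.finrank ℝ (LinearMap.range L) < 2 := by
    have := Submodule.finrank_mono hle
    have h4 : Module.finrank ℝ (ℝ × ℝ) = 2 := by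
      simp [Module.finrank_prod]
    omega
  have h5 : LinearMap.rank L = (Module.finrank ℝ (LinearMap.range L) : Cardinal) :=
    (Module.finrank_eq_rank ℝ _).symm
  rw [h5]
  exact_mod_cast Nat.cast_lt.2 h3

lemma two_le_rank {L : (ℝ × ℝ × ℝ × ℝ) →ₗ[ℝ] ℝ × ℝ} (v w : ℝ × ℝ × ℝ × ℝ)
    (h : (L v).1 * (L w).2 - (L v).2 * (L w).1 ≠ 0) : 2 ≤ LinearMap.rank L := by
  have hli : LinearIndependent ℝ ![L v, L w] := by
    rw [LinearIndependent.pair_iff]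
    intro a b hab
    have h1 : a * (L v).1 + b * (L w).1 = 0 := by
      have := congrArg Prod.fst hab
      simpa using this
    have h2 : a * (L v).2 + b * (L w).2 = 0 := by
      have := congrArg Prod.snd hab
      simpa using this
    constructor
    · have ha : a * ((L v).1 * (L w).2 - (L v).2 * (L w).1) = 0 := by
        linear_combination (L w).2 * h1 - (L w).1 * h2
      exact (mul_eq_zero.1 ha).resolve_right h
    · have hb : b * ((L v).1 * (L w).2 - (L v).2 * (L w).1) = 0 := by
        linear_combination (L v).1 * h2 - (L v).2 * h1
      exact (mul_eq_zero.1 hb).resolve_right h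
  have hmem : ∀ i : Fin 2, ![L v, L w] i ∈ LinearMap.range L := by
    intro i
    fin_cases i
    · exact ⟨v, rfl⟩
    · exact ⟨w, rfl⟩
  have hli' : LinearIndependent ℝ (fun i : Fin 2 => (⟨![L v, L w] i, hmem i⟩ :
      LinearMap.range L)) := by
    apply LinearIndependent.of_comp (LinearMap.range L).subtype
    convert hli
    rfl
  have := hli'.cardinal_le_rank
  simpa using this

lemma critical_iff (s : ℝ) (hs : s ≠ 0) (p : ℝ × ℝ × ℝ × ℝ) :
    LinearMap.rank (fderiv ℝ (wrinkleModel s) p).toLinearMap < 2 ↔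
      p.2.2.1 = 0 ∧ p.2.2.2 = 0 ∧ p.1 ^ 2 + p.2.1 ^ 2 + (s / 2) * p.1 = 0 := by
  rw [(wrinkle_hasFDerivAt s p).fderiv]
  obtain ⟨t, x, y, z⟩ := p
  simp only
  constructor
  · intro h
    by_contra hc
    refine absurd h (not_lt.2 ?_)
    by_cases hyz : y = 0 ∧ z = 0
    · obtain ⟨hy, hz⟩ := hyz
      have hE : t ^ 2 + x ^ 2 + (s / 2) * t ≠ 0 := fun hE => hc ⟨hy, hz, hE⟩
      refine two_le_rank (1, 0, 0, 0) (0, 1, 0, 0) ?_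
      simp only [ContinuousLinearMap.coe_coe, wDeriv_apply]
      simp only [hy, hz]
      intro hdet
      apply hE
      nlinarith [hdet]
    · refine two_le_rank (0, 0, 1, 0) (0, 0, 0, 1) ?_
      simp only [ContinuousLinearMap.coe_coe, wDeriv_apply]
      intro hdet
      apply hyz
      constructor <;> nlinarith [hdet, sq_nonneg y, sq_nonneg z]
  · rintro ⟨hy, hz, hE⟩
    subst hy hz
    by_cases htx : t = 0 ∧ x = 0
    · obtain ⟨ht, hx⟩ := htx
      subst ht hx
      refine rank_lt_two_of_ker (φ := LinearMap.snd ℝ ℝ ℝ) ?_ ?_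
      · intro h0
        have := congrFun (congrArg DFunLike.coe h0) (0, 1)
        simpa using this
      · intro v
        simp [wDeriv_apply]
    · refine rank_lt_two_of_ker
        (φ := (2 * t) • LinearMap.fst ℝ ℝ ℝ + (2 * x) • LinearMap.snd ℝ ℝ ℝ) ?_ ?_
      · intro h0
        apply htx
        have h1 := congrFun (congrArg DFunLike.coe h0) ((1 : ℝ), (0 : ℝ))
        have h2 := congrFun (congrArg DFunLike.coe h0) ((0 : ℝ), (1 : ℝ))
        simp only [LinearMap.add_apply, LinearMap.smul_apply, LinearMap.fst_apply,
          LinearMap.snd_apply, smul_eq_mul, mul_one, mul_zero, add_zero, zero_add,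
          LinearMap.zero_apply] at h1 h2
        constructor <;> nlinarith [h1, h2]
      · intro v
        simp only [ContinuousLinearMap.coe_coe, wDeriv_apply, LinearMap.add_apply,
          LinearMap.smul_apply, LinearMap.fst_apply, LinearMap.snd_apply, smul_eq_mul]
        linear_combination (4 * v.1) * hE

lemma exists_theta (a b : ℝ) (h : a ^ 2 + b ^ 2 = 1) :
    ∃ θ ∈ Set.Icc (0 : ℝ) (2 * π), Real.cos θ = a ∧ Real.sin θ = b := by
  have ha1 : -1 ≤ a := by nlinarith [sq_nonneg b]
  have ha2 : a ≤ 1 := by nlinarith [sq_nonneg b]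
  have hb2 : 1 - a ^ 2 = b ^ 2 := by linarith
  rcases le_or_gt 0 b with hb | hb
  · refine ⟨Real.arccos a, ⟨Real.arccos_nonneg a, ?_⟩,
      Real.cos_arccos ha1 ha2, ?_⟩
    · have := Real.arccos_le_pi a
      have := Real.pi_pos
      linarith
    · rw [Real.sin_arccos, hb2, Real.sqrt_sq hb]
  · refine ⟨2 * π - Real.arccos a, ⟨?_, ?_⟩, ?_, ?_⟩
    · have := Real.arccos_le_pi a
      have := Real.pi_pos
      linarith
    · have := Real.arccos_nonneg a
      linarith
    · rw [Real.cos_sub, Real.cos_two_pi, Real.sin_two_pi, Real.cos_arccos ha1 ha2]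
      ring
    · rw [Real.sin_sub, Real.cos_two_pi, Real.sin_two_pi, Real.sin_arccos, hb2,
        Real.sqrt_sq_eq_abs, abs_of_nonpos hb.le]
      ring

lemma wrinkle_part1 (s θ : ℝ) :
    wrinkleModel s (-(s / 4) * (1 + Real.cos θ), (s / 4) * Real.sin θ, 0, 0) =
      (-(s ^ 2 / 8) * (1 + Real.cos θ) * (2 - Real.cos θ),
       -(s ^ 2 / 8) * (1 + Real.cos θ) * Real.sin θ) := by
  have hsc := Real.sin_sq_add_cos_sq θ
  simp only [wrinkleModel, Prod.mk.injEq]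
  constructor
  · linear_combination (-(s ^ 2 / 16)) * hsc
  · ring

/-- For `s ≠ 0`, `F_s` maps the parametrized critical circle
`θ ↦ (−(s/4)(1+cos θ), (s/4) sin θ, 0, 0)` onto the parametrized closed curve
`θ ↦ (−(s²/8)(1+cos θ)(2−cos θ), −(s²/8)(1+cos θ) sin θ)`, and the image of the
critical point set of `F_s` is exactly this curve. -/
theorem stmt6 (s : ℝ) (hs : s ≠ 0) :
    (∀ θ : ℝ,
      wrinkleModel s (-(s / 4) * (1 + Real.cos θ), (s / 4) * Real.sin θ, 0, 0) =
        (-(s ^ 2 / 8) * (1 + Real.cos θ) * (2 - Real.cos θ),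
         -(s ^ 2 / 8) * (1 + Real.cos θ) * Real.sin θ)) ∧
    wrinkleModel s ''
        {p : ℝ × ℝ × ℝ × ℝ |
          LinearMap.rank (fderiv ℝ (wrinkleModel s) p).toLinearMap < 2} =
      {q : ℝ × ℝ | ∃ θ ∈ Set.Icc (0 : ℝ) (2 * π),
        q = (-(s ^ 2 / 8) * (1 + Real.cos θ) * (2 - Real.cos θ),
             -(s ^ 2 / 8) * (1 + Real.cos θ) * Real.sin θ)} := by
  refine ⟨wrinkle_part1 s, ?_⟩
  ext q
  simp only [Set.mem_image, Set.mem_setOf_eq]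
  constructor
  · rintro ⟨p, hp, rfl⟩
    rw [critical_iff s hs] at hp
    obtain ⟨t, x, y, z⟩ := p
    obtain ⟨hy, hz, hE⟩ := hp
    subst hy hz
    have hab : (-4 * t / s - 1) ^ 2 + (4 * x / s) ^ 2 = 1 := by
      field_simp
      linear_combination 16 * hE
    obtain ⟨θ, hθmem, hcos, hsin⟩ := exists_theta _ _ hab
    refine ⟨θ, hθmem, ?_⟩
    have hp' : ((t, x, 0, 0) : ℝ × ℝ × ℝ × ℝ)
        = (-(s / 4) * (1 + Real.cos θ), (s / 4) * Real.sin θ, 0, 0) := by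
      rw [hcos, hsin]
      have e1 : t = -(s / 4) * (1 + (-4 * t / s - 1)) := by
        field_simp
        ring
      have e2 : x = s / 4 * (4 * x / s) := by
        field_simp
      exact Prod.ext e1 (Prod.ext e2 rfl)
    rw [hp', wrinkle_part1 s θ]
  · rintro ⟨θ, hθmem, rfl⟩
    refine ⟨(-(s / 4) * (1 + Real.cos θ), (s / 4) * Real.sin θ, 0, 0), ?_, wrinkle_part1 s θ⟩
    rw [critical_iff s hs]
    refine ⟨rfl, rfl, ?_⟩
    have hsc := Real.sin_sq_add_cos_sq θ
    simp only
    linear_combination (s ^ 2 / 16) * hsc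
end
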